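/- Let G : ℝ^d → (convex compact subsets of ℝ^d) be l-Lipschitz w.r.t. the sup-norm Hausdorff distance with l < 1, and let x⁰, ŷ ∈ ℝ^d with ŷ ∉ x⁰ + G(x⁰). Then there exists x̂ ∈ ℝ^d with ŷ ∈ x̂ + ∂G(x̂) (the topological boundary of G(x̂)) and ‖x⁰ − x̂‖∞ ≤ dist∞(ŷ, x⁰ + G(x⁰)) / (1 − l). -/

import Mathlib

open Metric Set Pointwise

set_option maxHeartbeats 1000000

theorem stmt1 {d : ℕ} (G : (Fin d → ℝ) → Set (Fin d → ℝ))
    (hne : ∀ x, (G x).Nonempty) (hcv : ∀ x, Convex ℝ (G x))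
    (hcp : ∀ x, IsCompact (G x))
    (l : ℝ) (hl : l < 1)
    (hlip : ∀ x y, hausdorffDist (G x) (G y) ≤ l * dist x y)
    (x0 yhat : Fin d → ℝ) (hnotin : yhat ∉ {x0} + G x0) :
    ∃ xhat : Fin d → ℝ, yhat ∈ {xhat} + frontier (G xhat) ∧
      dist x0 xhat ≤ infDist yhat ({x0} + G x0) / (1 - l) := by
  classical
  -- dispose of the degenerate case l < 0
  rcases lt_or_ge l 0 with hl0 | hl0
  · exfalso
    rcases Nat.eq_zero_or_pos d with rfl | hd
    · haveI : Unique (Fin 0 → ℝ) := Pi.uniqueOfIsEmpty _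
      obtain ⟨g, hg⟩ := hne x0
      exact hnotin (Set.mem_add.2 ⟨x0, rfl, g, hg, Subsingleton.elim _ _⟩)
    · have hne01 : (0 : Fin d → ℝ) ≠ 1 := by
        intro h
        have := congrFun h ⟨0, hd⟩
        norm_num at this
      have hdp : 0 < dist (0 : Fin d → ℝ) 1 := dist_pos.2 hne01
      have h1 := hlip 0 1
      have h2 : (0:ℝ) ≤ hausdorffDist (G 0) (G 1) := hausdorffDist_nonneg
      nlinarith
  -- main case 0 ≤ l < 1
  have hfin : ∀ x y : Fin d → ℝ, EMetric.hausdorffEdist (G x) (G y) ≠ ⊤ := fun x y =>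
    hausdorffEdist_ne_top_of_nonempty_of_bounded (hne x) (hne y) (hcp x).isBounded
      (hcp y).isBounded
  have hdist_sub : ∀ a b : Fin d → ℝ, dist (yhat - a) (yhat - b) = dist a b := by
    intro a b
    rw [dist_eq_norm, dist_eq_norm, show yhat - a - (yhat - b) = -(a - b) by abel, norm_neg]
  set F : (Fin d → ℝ) → ℝ := fun x => infDist (yhat - x) (G x) with hFdef
  have hF_le : ∀ x y : Fin d → ℝ, F x ≤ F y + (1 + l) * dist x y := by
    intro x y
    calc F x ≤ infDist (yhat - x) (G y) + hausdorffDist (G y) (G x) :=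
          infDist_le_infDist_add_hausdorffDist (hfin y x)
      _ ≤ (infDist (yhat - y) (G y) + dist (yhat - x) (yhat - y)) + l * dist y x :=
          add_le_add infDist_le_infDist_add_dist (hlip y x)
      _ = F y + (1 + l) * dist x y := by
          rw [hdist_sub, dist_comm y x]; ring
  -- translation identity
  have hclosed0 : IsClosed ({x0} + G x0) := by
    rw [Set.singleton_add]
    exact ((hcp x0).image (continuous_const.add continuous_id)).isClosed
  have hne0' : ({x0} + G x0).Nonempty := by
    obtain ⟨g, hg⟩ := hne x0
    exact ⟨x0 + g, Set.mem_add.2 ⟨x0, rfl, g, hg, rfl⟩⟩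
  have key_trans : infDist yhat ({x0} + G x0) = F x0 := by
    have hiso : Isometry (fun g : Fin d → ℝ => x0 + g) := by
      apply Isometry.of_dist_eq
      intro a b
      rw [dist_eq_norm, dist_eq_norm, show x0 + a - (x0 + b) = a - b by abel]
    have h := infDist_image (x := yhat - x0) (t := G x0) hiso
    rw [Set.singleton_add]
    rw [show x0 + (yhat - x0) = yhat by abel] at h
    exact h
  set δ : ℝ := F x0 with hδdef
  have hδpos : 0 < δ := by
    rcases lt_or_eq_of_le (infDist_nonneg : (0:ℝ) ≤ F x0) with h | h
    · exact h
    · exfalso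
      apply hnotin
      rw [hclosed0.mem_iff_infDist_zero hne0', key_trans]
      exact h.symm
  -- the contraction-like step
  have pickP : ∀ x : Fin d → ℝ, ∃ x' : Fin d → ℝ, dist x x' = F x ∧ F x' ≤ l * F x := by
    intro x
    obtain ⟨g, hg, hgd⟩ := (hcp x).exists_infDist_eq_dist (hne x) (yhat - x)
    have hdx : dist x (yhat - g) = dist (yhat - x) g := by
      rw [dist_eq_norm, dist_eq_norm, show x - (yhat - g) = -((yhat - x) - g) by abel, norm_neg]
    refine ⟨yhat - g, by rw [hdx, ← hgd], ?_⟩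
    have h1 : yhat - (yhat - g) = g := by abel
    calc F (yhat - g) = infDist g (G (yhat - g)) := by rw [hFdef]; simp only [h1]
      _ ≤ infDist g (G x) + hausdorffDist (G x) (G (yhat - g)) :=
          infDist_le_infDist_add_hausdorffDist (hfin x _)
      _ ≤ 0 + l * dist x (yhat - g) :=
          add_le_add (le_of_eq (infDist_zero_of_mem hg)) (hlip x _)
      _ = l * F x := by rw [zero_add, hdx, ← hgd]
  choose pick hpick1 hpick2 using pickP
  set seq : ℕ → (Fin d → ℝ) := fun n => pick^[n] x0 with hseqdef
  have hseq0 : seq 0 = x0 := rfl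
  have hseqS : ∀ n, seq (n + 1) = pick (seq n) := by
    intro n
    simp [hseqdef, Function.iterate_succ_apply']
  have hFb : ∀ n, F (seq n) ≤ δ * l ^ n := by
    intro n
    induction n with
    | zero => simp [hseq0, hδdef]
    | succ n ih =>
        rw [hseqS n]
        calc F (pick (seq n)) ≤ l * F (seq n) := hpick2 _
          _ ≤ l * (δ * l ^ n) := by
              exact mul_le_mul_of_nonneg_left ih hl0
          _ = δ * l ^ (n + 1) := by ring
  have hdb : ∀ n, dist (seq n) (seq (n + 1)) ≤ δ * l ^ n := by
    intro n
    rw [hseqS n, hpick1 (seq n)]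
    exact hFb n
  have hcauchy : CauchySeq seq := cauchySeq_of_le_geometric l δ hl hdb
  obtain ⟨xstar, hxstar⟩ := cauchySeq_tendsto_of_complete hcauchy
  have hdx0star : dist x0 xstar ≤ δ / (1 - l) := by
    have := dist_le_of_le_geometric_of_tendsto₀ l δ hl hdb hxstar
    rwa [hseq0] at this
  have hFstar : F xstar = 0 := by
    have hle : ∀ n, F xstar ≤ δ * l ^ n + (1 + l) * dist (seq n) xstar := by
      intro n
      calc F xstar ≤ F (seq n) + (1 + l) * dist xstar (seq n) := hF_le _ _
        _ ≤ δ * l ^ n + (1 + l) * dist (seq n) xstar := by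
            rw [dist_comm xstar (seq n)]
            exact add_le_add_left (hFb n) _
    have h0 : Filter.Tendsto (fun n => δ * l ^ n + (1 + l) * dist (seq n) xstar)
        Filter.atTop (nhds 0) := by
      have h1 : Filter.Tendsto (fun n : ℕ => δ * l ^ n) Filter.atTop (nhds 0) := by
        have := (tendsto_pow_atTop_nhds_zero_of_lt_one hl0 hl).const_mul δ
        simpa using this
      have h2 : Filter.Tendsto (fun n => dist (seq n) xstar) Filter.atTop (nhds 0) :=
        tendsto_iff_dist_tendsto_zero.1 hxstar
      have := h1.add (h2.const_mul (1 + l))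
      simpa [mul_comm] using this
    exact le_antisymm (ge_of_tendsto' h0 hle) infDist_nonneg
  -- minimizer
  have hcontF : Continuous F := by
    have h1l : (0:ℝ) ≤ 1 + l := by linarith
    apply (LipschitzWith.of_dist_le_mul (K := (1 + l).toNNReal) (f := F) ?_).continuous
    intro x y
    rw [Real.dist_eq, Real.coe_toNNReal _ h1l, abs_sub_le_iff]
    have hxy := hF_le x y
    have hyx := hF_le y x
    rw [dist_comm y x] at hyx
    constructor <;> linarith
  set S : Set (Fin d → ℝ) := {x | F x = 0} with hSdef
  have hSclosed : IsClosed S := isClosed_eq hcontF continuous_const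
  set R : ℝ := δ / (1 - l) with hRdef
  have hR0 : 0 ≤ R := div_nonneg hδpos.le (by linarith)
  set K : Set (Fin d → ℝ) := S ∩ closedBall x0 R with hKdef
  have hxstarK : xstar ∈ K := by
    refine ⟨hFstar, ?_⟩
    rw [mem_closedBall, dist_comm]
    exact hdx0star
  have hKcp : IsCompact K := (isCompact_closedBall x0 R).inter_left hSclosed
  obtain ⟨xhat, hxhatK, hxhatd⟩ := hKcp.exists_infDist_eq_dist ⟨xstar, hxstarK⟩ x0
  have hdxhat : dist x0 xhat ≤ R := by
    rw [← hxhatd]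
    exact le_trans (infDist_le_dist_of_mem hxstarK) hdx0star
  have hmin : ∀ z ∈ S, dist x0 xhat ≤ dist x0 z := by
    intro z hz
    rcases le_or_gt (dist x0 z) R with h | h
    · rw [← hxhatd]
      exact infDist_le_dist_of_mem ⟨hz, by rwa [mem_closedBall, dist_comm]⟩
    · exact le_trans hdxhat h.le
  have hmemhat : yhat - xhat ∈ G xhat :=
    ((hcp xhat).isClosed.mem_iff_infDist_zero (hne xhat)).2 hxhatK.1
  -- the frontier property
  have hnint : yhat - xhat ∉ interior (G xhat) := by
    intro hint
    obtain ⟨ε, hε, hball⟩ := Metric.isOpen_iff.1 isOpen_interior _ hint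
    have hball' : ball (yhat - xhat) ε ⊆ G xhat := hball.trans interior_subset
    have hne0 : x0 ≠ xhat := by
      intro h
      have h0 : F xhat = 0 := hxhatK.1
      rw [← h] at h0
      exact hδpos.ne' h0
    set u : Fin d → ℝ := x0 - xhat with hudef
    have hu : 0 < ‖u‖ := norm_pos_iff.2 (sub_ne_zero.2 hne0)
    have h1l : (0:ℝ) < 1 + l := by linarith
    set t : ℝ := min 1 (ε / (2 * (1 + l) * ‖u‖)) with htdef
    have ht0 : 0 < t := lt_min one_pos (by positivity)
    have ht1 : t ≤ 1 := min_le_left _ _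
    set s : ℝ := t * ‖u‖ with hsdef
    have hs0 : 0 < s := mul_pos ht0 hu
    have hsε : s * (1 + l) < ε := by
      have htle : t ≤ ε / (2 * (1 + l) * ‖u‖) := min_le_right _ _
      have : s * (1 + l) ≤ (ε / (2 * (1 + l) * ‖u‖)) * (‖u‖ * (1 + l)) := by
        rw [hsdef]
        calc t * ‖u‖ * (1 + l) = t * (‖u‖ * (1 + l)) := by ring
          _ ≤ (ε / (2 * (1 + l) * ‖u‖)) * (‖u‖ * (1 + l)) :=
            mul_le_mul_of_nonneg_right htle (by positivity)
      have heq : (ε / (2 * (1 + l) * ‖u‖)) * (‖u‖ * (1 + l)) = ε / 2 := by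
        field_simp
      rw [heq] at this
      linarith
    set xt : Fin d → ℝ := xhat + t • u with hxtdef
    have hdxt : dist xhat xt = s := by
      rw [dist_eq_norm, show xhat - xt = -(t • u) by rw [hxtdef]; abel, norm_neg, norm_smul,
        Real.norm_eq_abs, abs_of_pos ht0]
    have hct : yhat - xt = (yhat - xhat) - t • u := by rw [hxtdef]; abel
    have hdctc : dist (yhat - xt) (yhat - xhat) = s := by rw [hdist_sub, dist_comm, hdxt]
    -- claim : yhat - xt ∈ G xt
    have hmemt : yhat - xt ∈ G xt := by
      by_contra hnot
      have hρ : 0 < infDist (yhat - xt) (G xt) := by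
        rcases lt_or_eq_of_le (infDist_nonneg : (0:ℝ) ≤ infDist (yhat - xt) (G xt)) with h | h
        · exact h
        · exact absurd (((hcp xt).isClosed.mem_iff_infDist_zero (hne xt)).2 h.symm) hnot
      set ρ : ℝ := infDist (yhat - xt) (G xt) with hρdef
      obtain ⟨b, hb, hbd⟩ := (hcp xt).exists_infDist_eq_dist (hne xt) (yhat - xt)
      set r : ℝ := l * s with hrdef
      have hr0 : 0 ≤ r := mul_nonneg hl0 hs0.le
      set a : Fin d → ℝ := (yhat - xt) + (r / ρ) • ((yhat - xt) - b) with hadef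
      have hnormctb : ‖(yhat - xt) - b‖ = ρ := by
        rw [← dist_eq_norm, ← hbd]
      have hdist_a_ct : dist a (yhat - xt) = r := by
        rw [dist_eq_norm, show a - (yhat - xt) = (r / ρ) • ((yhat - xt) - b) by
          rw [hadef]; abel, norm_smul, Real.norm_eq_abs,
          abs_of_nonneg (div_nonneg hr0 hρ.le), hnormctb, div_mul_cancel₀ _ hρ.ne']
      have haG : a ∈ G xhat := by
        apply hball'
        rw [mem_ball]
        calc dist a (yhat - xhat) ≤ dist a (yhat - xt) + dist (yhat - xt) (yhat - xhat) :=
            dist_triangle _ _ _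
          _ = r + s := by rw [hdist_a_ct, hdctc]
          _ < ε := by rw [hrdef]; nlinarith
      have hupper : infDist a (G xt) ≤ r := by
        calc infDist a (G xt) ≤ infDist a (G xhat) + hausdorffDist (G xhat) (G xt) :=
            infDist_le_infDist_add_hausdorffDist (hfin _ _)
          _ ≤ 0 + l * dist xhat xt := add_le_add (le_of_eq (infDist_zero_of_mem haG)) (hlip _ _)
          _ = r := by rw [zero_add, hdxt]
      have hlower : ρ + r ≤ infDist a (G xt) := by
        by_contra hlt
        push_neg at hlt
        obtain ⟨b', hb', hbd'⟩ := (infDist_lt_iff (hne xt)).1 hlt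
        have hρr : (0:ℝ) < ρ + r := by linarith
        have hsum : ρ / (ρ + r) + r / (ρ + r) = 1 := by field_simp
        have hp : (ρ / (ρ + r)) • b' + (r / (ρ + r)) • b ∈ G xt :=
          (hcv xt) hb' hb (by positivity) (by positivity) hsum
        have hkey : (yhat - xt) - ((ρ / (ρ + r)) • b' + (r / (ρ + r)) • b)
            = (ρ / (ρ + r)) • (a - b') := by
          have hρr' : (ρ + r) ≠ 0 := hρr.ne'
          have hsc : (ρ / (ρ + r)) * (r / ρ) = r / (ρ + r) := by
            field_simp
          rw [hadef, smul_sub, smul_add, smul_smul, hsc, smul_sub (r / (ρ + r))]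
          have hc : (ρ / (ρ + r)) • (yhat - xt) + (r / (ρ + r)) • (yhat - xt)
              = (yhat - xt) := by rw [← add_smul, hsum, one_smul]
          rw [show (ρ / (ρ + r)) • (yhat - xt) +
              ((r / (ρ + r)) • (yhat - xt) - (r / (ρ + r)) • b) - (ρ / (ρ + r)) • b'
              = ((ρ / (ρ + r)) • (yhat - xt) + (r / (ρ + r)) • (yhat - xt))
                - (r / (ρ + r)) • b - (ρ / (ρ + r)) • b' by abel, hc]
          abel
        have hle2 : ρ ≤ (ρ / (ρ + r)) * dist a b' := by
          have h := infDist_le_dist_of_mem (x := yhat - xt) hp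
          rw [← hρdef] at h
          rw [dist_eq_norm, hkey, norm_smul, Real.norm_eq_abs,
            abs_of_nonneg (by positivity), ← dist_eq_norm] at h
          exact h
        have hab : dist a b' < ρ + r := hbd'
        have hda : 0 ≤ dist a b' := dist_nonneg
        have : (ρ / (ρ + r)) * dist a b' < (ρ / (ρ + r)) * (ρ + r) := by
          apply mul_lt_mul_of_pos_left hab (by positivity)
        rw [div_mul_cancel₀ _ hρr.ne'] at this
        linarith
      linarith
    -- xt is in S and strictly closer to x0 : contradiction with minimality
    have hxtS : xt ∈ S := infDist_zero_of_mem hmemt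
    have hminxt := hmin xt hxtS
    have hdx0xt : dist x0 xt = (1 - t) * ‖u‖ := by
      rw [dist_eq_norm, show x0 - xt = (1 - t) • u by
        rw [hxtdef, sub_smul, one_smul, hudef]; abel, norm_smul, Real.norm_eq_abs,
        abs_of_nonneg (by linarith : (0:ℝ) ≤ 1 - t)]
    have hdx0xhat : dist x0 xhat = ‖u‖ := by rw [dist_eq_norm, hudef]
    rw [hdx0xt, hdx0xhat] at hminxt
    nlinarith
  refine ⟨xhat, ?_, ?_⟩
  · refine Set.mem_add.2 ⟨xhat, rfl, yhat - xhat, ?_, by abel⟩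
    rw [(hcp xhat).isClosed.frontier_eq]
    exact ⟨hmemhat, hnint⟩
  · rw [key_trans]
    exact hdxhat
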